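/- Let q be a prime power, n ≥ 1, F = 𝔽_{q^n}, and let m be a positive integer with gcd(m,n) = 1. Then the degenerate C_F^m-set Γ = {[x] ∈ PG(2,q^n) : x₁x₃^{q^m} = x₂^{q^m}x₃} is a set of type (1,2,q+1,q^n+1) with respect to lines: for every line ℓ of PG(2,q^n), |ℓ ∩ Γ| ∈ {1, 2, q+1, q^n+1}. -/

import Mathlib

section AuxArith

variable {F : Type*} [Field F]

lemma pow_pow_fixed (q : ℕ) {m n : ℕ} (hm : 0 < m) (hn : 0 < n)
    (hmn : Nat.gcd m n = 1) {z : F} (hzm : z ^ q ^ m = z) (hzn : z ^ q ^ n = z) :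
    z ^ q = z := by
  have iter : ∀ (r : ℕ), z ^ q ^ r = z → ∀ a : ℕ, z ^ q ^ (r * a) = z := by
    intro r hr a
    induction a with
    | zero => simp
    | succ a ih =>
      have h1 : q ^ (r * (a + 1)) = q ^ (r * a) * q ^ r := by
        rw [← pow_add]; ring_nf
      rw [h1, pow_mul, ih, hr]
  rcases eq_or_lt_of_le (show 1 ≤ n from hn) with h1 | h2
  · rw [← h1, pow_one] at hzn; exact hzn
  · have hco : Nat.Coprime m n := hmn
    have ht : m ^ n.totient % n = 1 % n := Nat.ModEq.pow_totient hco
    set M := m ^ n.totient with hM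
    have htot : 0 < n.totient := Nat.totient_pos.mpr hn
    have hMz : z ^ q ^ M = z := by
      have h2 : M = m * m ^ (n.totient - 1) := by
        rw [hM, ← pow_succ']; congr 1; omega
      rw [h2]; exact iter m hzm _
    obtain ⟨N, hNz, hMeq⟩ : ∃ N, z ^ q ^ N = z ∧ M = N + 1 := by
      refine ⟨n * (M / n), iter n hzn _, ?_⟩
      have h3 := Nat.div_add_mod M n
      have h4 : 1 % n = 1 := Nat.mod_eq_of_lt h2
      omega
    calc z ^ q = (z ^ q ^ N) ^ q := by rw [hNz]
    _ = z ^ (q ^ N * q) := by rw [← pow_mul]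
    _ = z ^ q ^ M := by rw [hMeq, pow_succ]
    _ = z := hMz

variable [Fintype F]

lemma frob_add (q n : ℕ) (hq : IsPrimePow q) (hn : 0 < n) (hF : Fintype.card F = q ^ n)
    (j : ℕ) (x y : F) : (x + y) ^ q ^ j = x ^ q ^ j + y ^ q ^ j := by
  obtain ⟨p, k, hp, hk, hpk⟩ := hq
  have hpN : Nat.Prime p := Nat.prime_iff.mpr hp
  obtain ⟨p', hcF⟩ := CharP.exists F
  haveI := hcF
  obtain ⟨d, hp'prime, hcard⟩ := FiniteField.card F p'
  have hpp' : p = p' := by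
    have h1 : p ^ (k * n) = p' ^ (d : ℕ) := by
      rw [pow_mul, hpk, ← hF, hcard]
    have h2 : p ∣ p' ^ (d : ℕ) := by
      rw [← h1]
      exact dvd_pow_self p (by positivity)
    exact (Nat.prime_dvd_prime_iff_eq hpN hp'prime).mp (hpN.dvd_of_dvd_pow h2)
  subst hpp'
  haveI : Fact p.Prime := ⟨hpN⟩
  rw [← hpk, ← pow_mul]
  exact add_pow_char_pow ..

lemma frob_sub (q n : ℕ) (hq : IsPrimePow q) (hn : 0 < n) (hF : Fintype.card F = q ^ n)
    (j : ℕ) (x y : F) : (x - y) ^ q ^ j = x ^ q ^ j - y ^ q ^ j := by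
  have h := frob_add q n hq hn hF j (x - y) y
  rw [sub_add_cancel] at h
  rw [eq_sub_iff_add_eq, ← h]

lemma frob_inj (q n : ℕ) (hq : IsPrimePow q) (hn : 0 < n) (hF : Fintype.card F = q ^ n)
    (j : ℕ) : Function.Injective (fun t : F => t ^ q ^ j) := by
  intro x y h
  simp only at h
  have hQ : q ^ j ≠ 0 := by
    have := hq.two_le; positivity
  have h2 : (x - y) ^ q ^ j = 0 := by
    rw [frob_sub q n hq hn hF j, h, sub_self]
  exact sub_eq_zero.mp (pow_eq_zero_iff hQ |>.mp h2)

lemma count_mu (q n : ℕ) (hq : 2 ≤ q) (hn : 0 < n) (hF : Fintype.card F = q ^ n) :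
    {z : F | z ^ (q - 1) = 1}.ncard = q - 1 := by
  have hd : 0 < q - 1 := by omega
  have hcu : Nat.card Fˣ = q ^ n - 1 := by
    rw [Nat.card_units, Nat.card_eq_fintype_card, hF]
  have hqn2 : 2 ≤ q ^ n := le_trans hq (Nat.le_self_pow hn.ne' q)
  have hN0 : 0 < q ^ n - 1 := by omega
  have hdvd : (q - 1) ∣ (q ^ n - 1) := by
    have h := Nat.sub_dvd_pow_sub_pow q 1 n
    simpa using h
  obtain ⟨g, hg⟩ := IsCyclic.exists_ofOrder_eq_natCard (α := Fˣ)
  rw [hcu] at hg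
  have hord : orderOf (g ^ ((q ^ n - 1) / (q - 1))) = q - 1 := by
    rw [orderOf_pow, hg, Nat.gcd_eq_right (Nat.div_dvd_of_dvd hdvd),
      Nat.div_div_self hdvd hN0.ne']
  have hprim : IsPrimitiveRoot ((g ^ ((q ^ n - 1) / (q - 1)) : Fˣ) : F) (q - 1) := by
    rw [IsPrimitiveRoot.coe_units_iff]
    simpa only [hord] using IsPrimitiveRoot.orderOf (g ^ ((q ^ n - 1) / (q - 1)))
  have hset : {z : F | z ^ (q - 1) = 1} = ↑(Polynomial.nthRootsFinset (q - 1) (1 : F)) := by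
    ext z; simp [Polynomial.mem_nthRootsFinset hd (1 : F)]
  rw [hset, Set.ncard_coe_finset, hprim.card_nthRootsFinset]

end AuxArith

section CountAffine

variable {F : Type*} [Field F] [Fintype F]

lemma count_affine (q n m : ℕ) (hq : IsPrimePow q) (hn : 0 < n) (hm : 0 < m)
    (hmn : Nat.gcd m n = 1) (hF : Fintype.card F = q ^ n)
    (A B C : F) (hAB : A ≠ 0 ∨ B ≠ 0) :
    {t : F | A * t ^ q ^ m + B * t = C}.ncard ∈ ({0, 1, q} : Set ℕ) := by
  have q2 : 2 ≤ q := hq.two_le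
  have hQ0 : q ^ m ≠ 0 := by positivity
  have hQ1 : 1 ≤ q ^ m := Nat.one_le_iff_ne_zero.mpr hQ0
  by_cases hA : A = 0
  · -- linear case
    have hB : B ≠ 0 := hAB.resolve_left (by simp [hA])
    have hset : {t : F | A * t ^ q ^ m + B * t = C} = {B⁻¹ * C} := by
      ext t
      simp only [Set.mem_setOf_eq, Set.mem_singleton_iff, hA, zero_mul, zero_add]
      constructor
      · intro h; field_simp [hB]; linear_combination h
      · intro h; subst h; field_simp
    rw [hset, Set.ncard_singleton]
    right; left; rfl
  · by_cases hB : B = 0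
    · -- pure Frobenius case
      obtain ⟨t0, ht0⟩ := (Finite.injective_iff_surjective.mp
        (frob_inj q n hq hn hF m)) (A⁻¹ * C)
      have ht0' : t0 ^ q ^ m = A⁻¹ * C := ht0
      have hset : {t : F | A * t ^ q ^ m + B * t = C} = {t0} := by
        ext t
        simp only [Set.mem_setOf_eq, Set.mem_singleton_iff, hB, zero_mul, add_zero]
        constructor
        · intro h
          have h2 : t ^ q ^ m = t0 ^ q ^ m := by
            rw [ht0']
            field_simp
            linear_combination h
          exact frob_inj q n hq hn hF m h2
        · intro h; subst h; rw [ht0']; field_simp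
      rw [hset, Set.ncard_singleton]
      right; left; rfl
    · -- both nonzero
      by_cases hS : {t : F | A * t ^ q ^ m + B * t = C} = ∅
      · rw [hS, Set.ncard_empty]; left; rfl
      · obtain ⟨t0, ht0⟩ := Set.nonempty_iff_ne_empty.mpr hS
        simp only [Set.mem_setOf_eq] at ht0
        have hSK : {t : F | A * t ^ q ^ m + B * t = C} =
            (fun u => t0 + u) '' {u : F | A * u ^ q ^ m + B * u = 0} := by
          ext t
          simp only [Set.mem_setOf_eq, Set.mem_image]
          constructor
          · intro h
            refine ⟨t - t0, ?_, by ring⟩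
            show A * (t - t0) ^ q ^ m + B * (t - t0) = 0
            rw [frob_sub q n hq hn hF m]
            linear_combination h - ht0
          · rintro ⟨u, hu, rfl⟩
            have hu' : A * u ^ q ^ m + B * u = 0 := hu
            rw [frob_add q n hq hn hF m]
            linear_combination ht0 + hu'
        rw [hSK, Set.ncard_image_of_injective _ (add_right_injective t0)]
        -- now count the kernel
        by_cases hK' : ∃ u : F, u ≠ 0 ∧ A * u ^ q ^ m + B * u = 0
        · obtain ⟨t1, ht1ne, ht1⟩ := hK'
          have hzpow : ∀ z : F, z ^ (q - 1) = 1 → z ^ (q ^ m) = z := by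
            intro z hz
            obtain ⟨c, hc⟩ : (q - 1) ∣ (q ^ m - 1) := by
              have h := Nat.sub_dvd_pow_sub_pow q 1 m
              simpa using h
            have h1 : z ^ (q ^ m - 1) = 1 := by
              rw [hc, pow_mul, hz, one_pow]
            calc z ^ q ^ m = z ^ (q ^ m - 1) * z := by
                  rw [← pow_succ]; congr 1; omega
            _ = z := by rw [h1, one_mul]
          have hK : {u : F | A * u ^ q ^ m + B * u = 0} =
              insert (0 : F) ((fun z => t1 * z) '' {z : F | z ^ (q - 1) = 1}) := by
            ext u
            simp only [Set.mem_setOf_eq, Set.mem_insert_iff, Set.mem_image]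
            constructor
            · intro hu
              by_cases h0 : u = 0
              · left; exact h0
              · right
                refine ⟨u / t1, ?_, by field_simp⟩
                have hz : u / t1 ≠ 0 := div_ne_zero h0 ht1ne
                have hfix : ∀ w : F, w ≠ 0 → A * w ^ q ^ m + B * w = 0 →
                    w ^ q ^ m = (-(B/A)) * w := by
                  intro w hw hwe
                  rw [neg_mul, div_mul_eq_mul_div, ← neg_div, eq_div_iff hA]
                  linear_combination hwe
                have hzm : (u / t1) ^ q ^ m = u / t1 := by
                  rw [div_pow, hfix u h0 hu, hfix t1 ht1ne ht1]
                  have hBA : (-(B/A)) ≠ 0 := by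
                    simp only [ne_eq, neg_eq_zero, div_eq_zero_iff, not_or]
                    exact ⟨hB, hA⟩
                  exact mul_div_mul_left _ _ hBA
                have hzn : (u / t1) ^ q ^ n = u / t1 := by
                  have h1 : (u / t1) ^ (q ^ n - 1) = 1 := by
                    have := FiniteField.pow_card_sub_one_eq_one (u / t1) hz
                    rwa [hF] at this
                  calc (u/t1) ^ q ^ n = (u/t1) ^ (q ^ n - 1) * (u/t1) := by
                        rw [← pow_succ]; congr 1
                        have : 1 ≤ q ^ n := Nat.one_le_pow n q (by omega)
                        omega
                  _ = u/t1 := by rw [h1, one_mul]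
                have hq1 : (u / t1) ^ q = u / t1 :=
                  pow_pow_fixed q hm hn hmn hzm hzn
                have hfin : (u / t1) ^ (q - 1) * (u / t1) = 1 * (u / t1) := by
                  rw [← pow_succ, one_mul]
                  have hq2 : q - 1 + 1 = q := by omega
                  rw [hq2, hq1]
                exact mul_right_cancel₀ hz hfin
            · rintro (rfl | ⟨z, hz, rfl⟩)
              · simp [zero_pow hQ0]
              · have hzm := hzpow z hz
                rw [mul_pow, hzm]
                linear_combination z * ht1
          rw [hK]
          have h0notmem : (0 : F) ∉ (fun z => t1 * z) '' {z : F | z ^ (q - 1) = 1} := by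
            rintro ⟨z, hz, hz0⟩
            simp only [Set.mem_setOf_eq] at hz
            have : z = 0 := by
              rcases mul_eq_zero.mp hz0 with h | h
              · exact absurd h ht1ne
              · exact h
            rw [this, zero_pow (by omega : q - 1 ≠ 0)] at hz
            exact zero_ne_one hz
          rw [Set.ncard_insert_of_notMem h0notmem,
            Set.ncard_image_of_injective _ (mul_right_injective₀ ht1ne),
            count_mu q n q2 hn hF]
          right; right
          simp only [Set.mem_singleton_iff]
          omega
        · have hK : {u : F | A * u ^ q ^ m + B * u = 0} = {0} := by
            ext u
            simp only [Set.mem_setOf_eq, Set.mem_singleton_iff]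
            constructor
            · intro hu
              by_contra h0
              exact hK' ⟨u, h0, hu⟩
            · intro h; subst h; simp [zero_pow hQ0]
          rw [hK, Set.ncard_singleton]
          right; left; rfl

end CountAffine

open scoped LinearAlgebra.Projectivization

def projLine (F : Type*) [Field F] (W : Submodule F (Fin 3 → F)) :
    Set (ℙ F (Fin 3 → F)) :=
  {P : ℙ F (Fin 3 → F) | P.rep ∈ W}

section Proj

variable {F : Type*} [Field F]

lemma mem_gamma_iff (Q : ℕ) (Γ : Set (ℙ F (Fin 3 → F)))
    (hΓ : Γ = {P : ℙ F (Fin 3 → F) | P.rep 0 * (P.rep 2) ^ Q = (P.rep 1) ^ Q * P.rep 2})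
    (v : Fin 3 → F) (hv : v ≠ 0) :
    Projectivization.mk F v hv ∈ Γ ↔ v 0 * v 2 ^ Q = v 1 ^ Q * v 2 := by
  subst hΓ
  set P := Projectivization.mk F v hv with hP
  obtain ⟨c, hc⟩ := (Projectivization.mk_eq_mk_iff F _ _ P.rep_nonzero hv).mp
    (Projectivization.mk_rep P)
  have hc0 : (c : F) ≠ 0 := c.ne_zero
  show P.rep 0 * (P.rep 2) ^ Q = (P.rep 1) ^ Q * P.rep 2 ↔ _
  rw [← hc]
  simp only [Pi.smul_apply, Units.smul_def, smul_eq_mul]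
  constructor
  · intro h
    apply mul_left_cancel₀ (pow_ne_zero (Q + 1) hc0)
    calc (c : F) ^ (Q + 1) * (v 0 * v 2 ^ Q) = ((c : F) * v 0) * ((c : F) * v 2) ^ Q := by ring
    _ = ((c : F) * v 1) ^ Q * ((c : F) * v 2) := h
    _ = (c : F) ^ (Q + 1) * (v 1 ^ Q * v 2) := by ring
  · intro h
    calc ((c : F) * v 0) * ((c : F) * v 2) ^ Q = (c : F) ^ (Q + 1) * (v 0 * v 2 ^ Q) := by ring
    _ = (c : F) ^ (Q + 1) * (v 1 ^ Q * v 2) := by rw [h]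
    _ = ((c : F) * v 1) ^ Q * ((c : F) * v 2) := by ring

lemma mem_line_iff (W : Submodule F (Fin 3 → F)) (v : Fin 3 → F) (hv : v ≠ 0) :
    Projectivization.mk F v hv ∈ projLine F W ↔ v ∈ W := by
  set P := Projectivization.mk F v hv with hP
  obtain ⟨c, hc⟩ := (Projectivization.mk_eq_mk_iff F _ _ P.rep_nonzero hv).mp
    (Projectivization.mk_rep P)
  show P.rep ∈ W ↔ _
  rw [← hc, Units.smul_def]
  exact W.smul_mem_iff c.ne_zero

lemma key_count [Fintype F] (Q : ℕ) (hQ : Q ≠ 0)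
    (Γ : Set (ℙ F (Fin 3 → F)))
    (hΓ : Γ = {P : ℙ F (Fin 3 → F) | P.rep 0 * (P.rep 2) ^ Q = (P.rep 1) ^ Q * P.rep 2})
    (W : Submodule F (Fin 3 → F)) (a b : Fin 3 → F)
    (hspan : Submodule.span F {a, b} = W)
    (hli : ∀ s t : F, s • a + t • b = 0 → s = 0 ∧ t = 0)
    (ha2 : a 2 = 0) :
    (projLine F W ∩ Γ).ncard =
      {t : F | (t • a + b) 0 * ((t • a + b) 2) ^ Q
        = ((t • a + b) 1) ^ Q * ((t • a + b) 2)}.ncard + 1 := by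
  haveI : Finite (ℙ F (Fin 3 → F)) := Quotient.finite _
  have ha : a ≠ 0 := by
    intro h
    exact one_ne_zero (hli 1 0 (by simp [h])).1
  have htab : ∀ t : F, t • a + b ≠ 0 := by
    intro t h
    exact one_ne_zero (hli t 1 (by simpa using h)).2
  set S := {t : F | (t • a + b) 0 * ((t • a + b) 2) ^ Q
    = ((t • a + b) 1) ^ Q * ((t • a + b) 2)} with hSdef
  have hdecomp : projLine F W ∩ Γ = insert (Projectivization.mk F a ha)
      ((fun t => Projectivization.mk F (t • a + b) (htab t)) '' S) := by
    ext P
    constructor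
    · rintro ⟨hPL, hPG⟩
      have hrepW : P.rep ∈ Submodule.span F {a, b} := by rw [hspan]; exact hPL
      obtain ⟨s, t, hst⟩ := Submodule.mem_span_pair.mp hrepW
      by_cases ht : t = 0
      · subst ht
        have hs : s ≠ 0 := by
          intro h
          apply P.rep_nonzero
          rw [← hst, h]; simp
        left
        rw [← Projectivization.mk_rep P, Projectivization.mk_eq_mk_iff]
        refine ⟨Units.mk0 s hs, ?_⟩
        rw [Units.smul_def, Units.val_mk0]
        rw [← hst]; simp
      · have hPmk : P = Projectivization.mk F ((s / t) • a + b) (htab _) := by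
          rw [← Projectivization.mk_rep P, Projectivization.mk_eq_mk_iff]
          refine ⟨Units.mk0 t ht, ?_⟩
          rw [Units.smul_def, Units.val_mk0, smul_add, smul_smul]
          rw [mul_div_cancel₀ s ht]
          exact hst
        right
        refine ⟨s / t, ?_, hPmk.symm⟩
        rw [hPmk] at hPG
        exact (mem_gamma_iff Q Γ hΓ _ _).mp hPG
    · intro hP
      rcases Set.mem_insert_iff.mp hP with rfl | ⟨t, htS, rfl⟩
      · constructor
        · apply (mem_line_iff W a ha).mpr
          rw [← hspan]
          exact Submodule.subset_span (Set.mem_insert _ _)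
        · rw [mem_gamma_iff Q Γ hΓ a ha, ha2]
          simp [zero_pow hQ]
      · constructor
        · apply (mem_line_iff W _ (htab t)).mpr
          rw [← hspan]
          exact Submodule.add_mem _
            (Submodule.smul_mem _ _ (Submodule.subset_span (Set.mem_insert _ _)))
            (Submodule.subset_span (by simp))
        · exact (mem_gamma_iff Q Γ hΓ _ (htab t)).mpr htS
  rw [hdecomp]
  have hnotmem : Projectivization.mk F a ha ∉
      (fun t => Projectivization.mk F (t • a + b) (htab t)) '' S := by
    rintro ⟨t, htS, hEq⟩
    rw [Projectivization.mk_eq_mk_iff] at hEq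
    obtain ⟨c, hc⟩ := hEq
    rw [Units.smul_def] at hc
    have h2 := hli ((c : F) - t) (-1)
      (by linear_combination (norm := module) hc)
    exact one_ne_zero (neg_eq_zero.mp h2.2)
  rw [Set.ncard_insert_of_notMem hnotmem]
  congr 1
  apply Set.ncard_image_of_injective
  intro t t' hEq
  rw [Projectivization.mk_eq_mk_iff] at hEq
  obtain ⟨c, hc⟩ := hEq
  rw [Units.smul_def, smul_add, smul_smul] at hc
  have h2 := hli ((c : F) * t' - t) ((c : F) - 1)
    (by linear_combination (norm := module) hc)
  have hc1 : (c : F) = 1 := sub_eq_zero.mp h2.2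
  have h4 := h2.1
  rw [hc1, one_mul] at h4
  exact (sub_eq_zero.mp h4).symm

end Proj

section Pairs

variable {F : Type*} [Field F] {W : Submodule F (Fin 3 → F)} {u v : Fin 3 → F}

lemma exists_pair (W : Submodule F (Fin 3 → F)) (hW : Module.finrank F ↥W = 2) :
    ∃ u v : Fin 3 → F, Submodule.span F {u, v} = W ∧
      ∀ s t : F, s • u + t • v = 0 → s = 0 ∧ t = 0 := by
  haveI : FiniteDimensional F ↥W := FiniteDimensional.finiteDimensional_submodule W
  let B := (Module.finBasis F ↥W).reindex (finCongr hW)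
  refine ⟨(B 0 : Fin 3 → F), (B 1 : Fin 3 → F), ?_, ?_⟩
  · have h1 : Set.range (⇑B) = {B 0, B 1} := by
      ext x
      constructor
      · rintro ⟨i, rfl⟩
        fin_cases i
        · exact Set.mem_insert _ _
        · exact Set.mem_insert_of_mem _ rfl
      · rintro (rfl | h)
        · exact ⟨0, rfl⟩
        · rw [Set.mem_singleton_iff] at h; subst h; exact ⟨1, rfl⟩
    have h3 : ({((B 0 : ↥W) : Fin 3 → F), ((B 1 : ↥W) : Fin 3 → F)} : Set (Fin 3 → F))
        = W.subtype '' {B 0, B 1} := by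
      rw [Set.image_pair]; rfl
    rw [h3, Submodule.span_image, ← h1, B.span_eq, Submodule.map_subtype_top]
  · intro s t hst
    have h4 : s • B 0 + t • B 1 = (0 : ↥W) := by
      apply Subtype.coe_injective
      show ((s • B 0 + t • B 1 : ↥W) : Fin 3 → F) = ((0 : ↥W) : Fin 3 → F)
      rw [Submodule.coe_add, SetLike.val_smul, SetLike.val_smul, ZeroMemClass.coe_zero]
      exact hst
    have h6 := Fintype.linearIndependent_iff.mp B.linearIndependent ![s, t]
      (by rw [Fin.sum_univ_two, Matrix.cons_val_zero, Matrix.cons_val_one, Matrix.cons_val_zero]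
          exact h4)
    exact ⟨h6 0, h6 1⟩

lemma pair_swap (hspan : Submodule.span F {u, v} = W)
    (hli : ∀ s t : F, s • u + t • v = 0 → s = 0 ∧ t = 0) :
    Submodule.span F {v, u} = W ∧ ∀ s t : F, s • v + t • u = 0 → s = 0 ∧ t = 0 := by
  refine ⟨by rw [Set.pair_comm]; exact hspan, ?_⟩
  intro s t h
  have h2 := hli t s (by rw [← h]; abel)
  exact ⟨h2.2, h2.1⟩

lemma pair_scale (c : F) (hc : c ≠ 0) (hspan : Submodule.span F {u, v} = W)
    (hli : ∀ s t : F, s • u + t • v = 0 → s = 0 ∧ t = 0) :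
    Submodule.span F {u, c • v} = W ∧
      ∀ s t : F, s • u + t • (c • v) = 0 → s = 0 ∧ t = 0 := by
  constructor
  · apply le_antisymm
    · rw [Submodule.span_le]
      intro x hx
      rw [← hspan]
      rcases Set.mem_insert_iff.mp hx with rfl | hx
      · exact Submodule.subset_span (Set.mem_insert _ _)
      · rw [Set.mem_singleton_iff] at hx; subst hx
        exact Submodule.smul_mem _ _ (Submodule.subset_span (by simp))
    · rw [← hspan, Submodule.span_le]
      intro x hx
      rcases Set.mem_insert_iff.mp hx with rfl | hx
      · exact Submodule.subset_span (Set.mem_insert _ _)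
      · rw [Set.mem_singleton_iff] at hx; subst hx
        have h1 : c⁻¹ • (c • x) ∈ Submodule.span F {u, c • x} :=
          Submodule.smul_mem _ _ (Submodule.subset_span (by simp))
        rwa [smul_smul, inv_mul_cancel₀ hc, one_smul] at h1
  · intro s t h
    have h2 := hli s (t * c) (by rw [mul_smul]; exact h)
    exact ⟨h2.1, (mul_eq_zero.mp h2.2).resolve_right hc⟩

lemma pair_shear (c : F) (hspan : Submodule.span F {u, v} = W)
    (hli : ∀ s t : F, s • u + t • v = 0 → s = 0 ∧ t = 0) :
    Submodule.span F {u + c • v, v} = W ∧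
      ∀ s t : F, s • (u + c • v) + t • v = 0 → s = 0 ∧ t = 0 := by
  constructor
  · apply le_antisymm
    · rw [Submodule.span_le]
      intro x hx
      rw [← hspan]
      rcases Set.mem_insert_iff.mp hx with rfl | hx
      · exact Submodule.add_mem _ (Submodule.subset_span (Set.mem_insert _ _))
          (Submodule.smul_mem _ _ (Submodule.subset_span (by simp)))
      · rw [Set.mem_singleton_iff] at hx; subst hx
        exact Submodule.subset_span (by simp)
    · rw [← hspan, Submodule.span_le]
      intro x hx
      rcases Set.mem_insert_iff.mp hx with rfl | hx
      · have h1 : (x + c • v) + (-c) • v ∈ Submodule.span F {x + c • v, v} :=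
          Submodule.add_mem _ (Submodule.subset_span (Set.mem_insert _ _))
            (Submodule.smul_mem _ _ (Submodule.subset_span (by simp)))
        rwa [neg_smul, add_neg_cancel_right] at h1
      · rw [Set.mem_singleton_iff] at hx; subst hx
        exact Submodule.subset_span (by simp)
  · intro s t h
    have h2 := hli s (s * c + t) (by
      rw [add_smul, mul_smul]
      linear_combination (norm := module) h)
    refine ⟨h2.1, ?_⟩
    have h3 := h2.2
    rw [h2.1, zero_mul, zero_add] at h3
    exact h3

end Pairs

/-- The degenerate C_F^m-set Γ = {[x] ∈ PG(2,qⁿ) : x₁x₃^(q^m) = x₂^(q^m)x₃}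
is a set of type (1,2,q+1,qⁿ+1) with respect to lines. -/
theorem degenerate_CFm_set_type_wrt_lines
    (q n m : ℕ) (hq : IsPrimePow q) (hn : 1 ≤ n) (hm : 0 < m)
    (hmn : Nat.gcd m n = 1)
    (F : Type*) [Field F] [Fintype F] (hF : Fintype.card F = q ^ n)
    (Γ : Set (ℙ F (Fin 3 → F)))
    (hΓ : Γ = {P : ℙ F (Fin 3 → F) |
      P.rep 0 * (P.rep 2) ^ (q ^ m) = (P.rep 1) ^ (q ^ m) * P.rep 2})
    (W : Submodule F (Fin 3 → F)) (hW : Module.finrank F ↥W = 2) :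
    (projLine F W ∩ Γ).ncard ∈ ({1, 2, q + 1, q ^ n + 1} : Set ℕ) := by
  have q2 : 2 ≤ q := hq.two_le
  have hn0 : 0 < n := hn
  have hQne : q ^ m ≠ 0 := by positivity
  obtain ⟨u, v, hspan, hli⟩ := exists_pair W hW
  by_cases huv : u 2 = 0 ∧ v 2 = 0
  · -- the line is entirely contained in Γ
    have hcount := key_count (q ^ m) hQne Γ hΓ W u v hspan hli huv.1
    have hSuniv : {t : F | (t • u + v) 0 * ((t • u + v) 2) ^ (q ^ m)
        = ((t • u + v) 1) ^ (q ^ m) * ((t • u + v) 2)} = Set.univ := by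
      ext t
      simp [Pi.add_apply, Pi.smul_apply, smul_eq_mul, huv.1, huv.2, zero_pow hQne]
    rw [hcount, hSuniv, Set.ncard_univ, Nat.card_eq_fintype_card, hF]
    exact Or.inr (Or.inr (Or.inr rfl))
  · -- find a pair (a, b₀) with a 2 = 0, b₀ 2 ≠ 0
    obtain ⟨a, b0, hspan', hli', ha2, hb2ne⟩ :
        ∃ a b0 : Fin 3 → F, Submodule.span F {a, b0} = W ∧
          (∀ s t : F, s • a + t • b0 = 0 → s = 0 ∧ t = 0) ∧ a 2 = 0 ∧ b0 2 ≠ 0 := by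
      by_cases hu2 : u 2 = 0
      · have hv2 : v 2 ≠ 0 := fun h => huv ⟨hu2, h⟩
        exact ⟨u, v, hspan, hli, hu2, hv2⟩
      · by_cases hv2 : v 2 = 0
        · obtain ⟨h1, h2⟩ := pair_swap hspan hli
          exact ⟨v, u, h1, h2, hv2, hu2⟩
        · obtain ⟨h1, h2⟩ := pair_swap hspan hli
          obtain ⟨h3, h4⟩ := pair_shear (-(v 2 / u 2)) h1 h2
          refine ⟨v + (-(v 2 / u 2)) • u, u, h3, h4, ?_, hu2⟩
          simp only [Pi.add_apply, Pi.smul_apply, smul_eq_mul]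
          field_simp
          ring
    set b : Fin 3 → F := (b0 2)⁻¹ • b0 with hbdef
    obtain ⟨hspan'', hli''⟩ := pair_scale ((b0 2)⁻¹) (inv_ne_zero hb2ne) hspan' hli'
    have hb2 : b 2 = 1 := by
      rw [hbdef]
      simp only [Pi.smul_apply, smul_eq_mul]
      exact inv_mul_cancel₀ hb2ne
    have hcount := key_count (q ^ m) hQne Γ hΓ W a b hspan'' hli'' ha2
    have hane : a ≠ 0 := by
      intro h
      exact one_ne_zero (hli' 1 0 (by simp [h])).1
    have hAB : (a 1) ^ (q ^ m) ≠ 0 ∨ -(a 0) ≠ 0 := by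
      by_contra hcon
      push_neg at hcon
      have ha1 : a 1 = 0 := pow_eq_zero_iff hQne |>.mp hcon.1
      have ha0 : a 0 = 0 := neg_eq_zero.mp hcon.2
      apply hane
      funext i
      fin_cases i
      · exact ha0
      · exact ha1
      · exact ha2
    have hSeq : {t : F | (t • a + b) 0 * ((t • a + b) 2) ^ (q ^ m)
        = ((t • a + b) 1) ^ (q ^ m) * ((t • a + b) 2)} =
        {t : F | (a 1) ^ (q ^ m) * t ^ (q ^ m) + (-(a 0)) * t = b 0 - (b 1) ^ (q ^ m)} := by
      ext t
      simp only [Set.mem_setOf_eq, Pi.add_apply, Pi.smul_apply, smul_eq_mul, ha2, hb2,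
        mul_zero, zero_add, one_pow, mul_one]
      rw [frob_add q n hq hn0 hF m (t * a 1) (b 1), mul_pow]
      constructor
      · intro h; linear_combination -h
      · intro h; linear_combination -h
    rw [hcount, hSeq]
    have hmem := count_affine q n m hq hn0 hm hmn hF
      ((a 1) ^ (q ^ m)) (-(a 0)) (b 0 - (b 1) ^ (q ^ m)) hAB
    simp only [Set.mem_insert_iff, Set.mem_singleton_iff] at hmem ⊢
    rcases hmem with h | h | h
    · rw [h]; left; rfl
    · rw [h]; right; left; rfl
    · rw [h]; right; right; left
      omega
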